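/- The wheel W_4 (a 4-cycle plus a central vertex joined to all four cycle vertices) cannot be decomposed into three odd subgraphs. -/

import Mathlib

open Finset
open scoped Classical

/-- A multigraph on vertex type `V` with edge index type `E`: each edge `e` has two
distinct endpoints given as an unordered pair `ends e` (no loops, multiple edges allowed). -/
structure Multigraph (V : Type) (E : Type) where
  ends : E → Sym2 V
  no_loops : ∀ e, ¬ (ends e).IsDiag

namespace Multigraph

variable {V E : Type} [Fintype V] [Fintype E]

/-- The number of edges from the edge set `F` incident with `v`. -/
noncomputable def degIn (G : Multigraph V E) (F : Finset E) (v : V) : ℕ :=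
  (F.filter (fun e => v ∈ G.ends e)).card

/-- The degree of `v` in `G`. -/
noncomputable def deg (G : Multigraph V E) (v : V) : ℕ := G.degIn Finset.univ v

/-- The underlying simple graph of `G`. -/
def simple (G : Multigraph V E) : SimpleGraph V where
  Adj x y := x ≠ y ∧ ∃ e : E, G.ends e = s(x, y)
  symm := ⟨by
    rintro x y ⟨hxy, e, he⟩
    exact ⟨hxy.symm, e, by rw [he, Sym2.eq_swap]⟩⟩
  loopless := ⟨fun x h => h.1 rfl⟩

/-- `C` is the vertex set of a connected component of the subgraph of `G` induced by `S`. -/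
def IsComponentOf (G : Multigraph V E) (S : Set V) (C : Finset V) : Prop :=
  ∃ v ∈ S, ∀ x : V, x ∈ C ↔
    Relation.ReflTransGen (fun a b => a ∈ S ∧ b ∈ S ∧ (G.simple).Adj a b) v x

/-- The number of edges of `G` with one endpoint in `U₁` and the other in `U₂`. -/
noncomputable def eBetween (G : Multigraph V E) (U₁ U₂ : Finset V) : ℕ :=
  (Finset.univ.filter (fun e : E => ∃ x ∈ U₁, ∃ y ∈ U₂, G.ends e = s(x, y))).card

/-- The set of vertices of `G` of odd degree. -/
noncomputable def oddVerts (G : Multigraph V E) : Finset V :=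
  Finset.univ.filter (fun v => Odd (G.deg v))

/-- The set of vertices of `G` of even degree. -/
noncomputable def evenVerts (G : Multigraph V E) : Finset V :=
  Finset.univ.filter (fun v => Even (G.deg v))

/-- `F` forms an odd subgraph: every vertex incident with an edge of `F` has odd `F`-degree. -/
def IsOddSet (G : Multigraph V E) (F : Finset E) : Prop :=
  ∀ v : V, (∃ e ∈ F, v ∈ G.ends e) → Odd (G.degIn F v)

/-- `F` forms an even subgraph: every vertex has even `F`-degree. -/
def IsEvenSet (G : Multigraph V E) (F : Finset E) : Prop :=
  ∀ v : V, Even (G.degIn F v)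

end Multigraph

open Multigraph

/-- The wheel `W₄`: a 4-cycle on `0,1,2,3` plus the central vertex `4` joined to all of them. -/
def W4 : SimpleGraph (Fin 5) :=
  SimpleGraph.fromEdgeSet
    {s(0, 1), s(1, 2), s(2, 3), s(3, 0), s(4, 0), s(4, 1), s(4, 2), s(4, 3)}

def W4E : Finset (Sym2 (Fin 5)) :=
  {s(0,1), s(1,2), s(2,3), s(3,0), s(4,0), s(4,1), s(4,2), s(4,3)}

def ed : Fin 8 → Sym2 (Fin 5) :=
  ![s(0,1), s(1,2), s(2,3), s(3,0), s(4,0), s(4,1), s(4,2), s(4,3)]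

lemma W4_edgeSet : W4.edgeSet = ↑W4E := by
  rw [W4, SimpleGraph.edgeSet_fromEdgeSet]
  ext e
  simp only [Set.mem_diff, Set.mem_insert_iff, Set.mem_singleton_iff, Set.mem_setOf_eq,
    Finset.coe_insert, Finset.coe_singleton, W4E]
  constructor
  · rintro ⟨he, -⟩; exact he
  · intro he
    refine ⟨he, ?_⟩
    rcases he with h|h|h|h|h|h|h|h <;> subst h <;> decide


lemma ed0 : ed 0 = s(0,1) := rfl
lemma ed1 : ed 1 = s(1,2) := rfl
lemma ed2 : ed 2 = s(2,3) := rfl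
lemma ed3 : ed 3 = s(3,0) := rfl
lemma ed4 : ed 4 = s(4,0) := rfl
lemma ed5 : ed 5 = s(4,1) := rfl
lemma ed6 : ed 6 = s(4,2) := rfl
lemma ed7 : ed 7 = s(4,3) := rfl

lemma hedW : ∀ j, ed j ∈ W4E := by decide
lemma hinj : ∀ j k : Fin 8, ed j = ed k → j = k := by decide
lemma hsurj : ∀ e ∈ W4E, ∃ j, ed j = e := by decide

def ind (x i : Fin 3) : ℕ := if x = i then 1 else 0

def N (a b c d e f g h : Fin 3) (i : Fin 3) (v : Fin 5) : ℕ :=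
  match v with
  | 0 => ind a i + ind d i + ind e i
  | 1 => ind a i + ind b i + ind f i
  | 2 => ind b i + ind c i + ind g i
  | 3 => ind c i + ind d i + ind h i
  | 4 => ind e i + ind f i + ind g i + ind h i

set_option maxHeartbeats 4000000 in
set_option maxRecDepth 10000 in
lemma core3 : ∀ a b c d e f g h : Fin 3, ∃ i : Fin 3, ∃ v : Fin 5,
    0 < N a b c d e f g h i v ∧ N a b c d e f g h i v % 2 = 0 := by decide


theorem stmt16 :
    ¬ ∃ E1 E2 E3 : Finset (Sym2 (Fin 5)),
      (↑E1 ∪ ↑E2 ∪ ↑E3 : Set (Sym2 (Fin 5))) = W4.edgeSet ∧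
      Disjoint E1 E2 ∧ Disjoint E1 E3 ∧ Disjoint E2 E3 ∧
      ∀ Ei ∈ [E1, E2, E3], ∀ v : Fin 5, (∃ e ∈ Ei, v ∈ e) →
        Odd ((Ei.filter (fun e => v ∈ e)).card) := by
  rintro ⟨E1, E2, E3, hU, h12, h13, h23, hodd⟩
  have hsub : E1 ∪ E2 ∪ E3 = W4E := by
    apply Finset.coe_injective
    rw [Finset.coe_union, Finset.coe_union, hU, W4_edgeSet]
  set Es : Fin 3 → Finset (Sym2 (Fin 5)) := ![E1, E2, E3] with hEs
  set f : Fin 8 → Fin 3 :=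
    fun j => if ed j ∈ E1 then 0 else if ed j ∈ E2 then 1 else 2 with hf
  have hcover : ∀ j, ed j ∈ E1 ∨ ed j ∈ E2 ∨ ed j ∈ E3 := by
    intro j
    have h := hedW j
    rw [← hsub] at h
    simpa [Finset.mem_union, or_assoc] using h
  have hfi : ∀ j i, f j = i ↔ ed j ∈ Es i := by
    intro j i
    by_cases h1 : ed j ∈ E1
    · have h2 : ed j ∉ E2 := Finset.disjoint_left.mp h12 h1
      have h3 : ed j ∉ E3 := Finset.disjoint_left.mp h13 h1
      fin_cases i <;> simp [hf, hEs, h1, h2, h3]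
    · by_cases h2 : ed j ∈ E2
      · have h3 : ed j ∉ E3 := Finset.disjoint_left.mp h23 h2
        fin_cases i <;> simp [hf, hEs, h1, h2, h3]
      · have h3 : ed j ∈ E3 := by
          rcases hcover j with h|h|h <;> tauto
        fin_cases i <;> simp [hf, hEs, h1, h2, h3]
  have hEsW : ∀ i, Es i ⊆ W4E := by
    intro i
    rw [← hsub]
    fin_cases i <;> intro x hx <;> simp [hEs] at hx <;>
      simp [Finset.mem_union, hx]
  have hcard : ∀ i v, ((Es i).filter (fun e => v ∈ e)).card =
      (Finset.univ.filter (fun j => f j = i ∧ v ∈ ed j)).card := by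
    intro i v
    refine (Finset.card_bij (fun j _ => ed j) ?_ ?_ ?_).symm
    · intro j hj
      simp only [Finset.mem_filter, Finset.mem_univ, true_and] at hj
      simp only [Finset.mem_filter]
      exact ⟨(hfi j i).1 hj.1, hj.2⟩
    · intro j1 h1 j2 h2 h
      exact hinj _ _ h
    · intro e he
      simp only [Finset.mem_filter] at he
      obtain ⟨hei, hv⟩ := he
      obtain ⟨j, rfl⟩ := hsurj e (hEsW i hei)
      exact ⟨j, by simp [Finset.mem_filter, (hfi j i).2 hei, hv], rfl⟩
  have hNv : ∀ i v, (Finset.univ.filter (fun j => f j = i ∧ v ∈ ed j)).card =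
      N (f 0) (f 1) (f 2) (f 3) (f 4) (f 5) (f 6) (f 7) i v := by
    intro i v
    fin_cases v <;>
      rw [Finset.card_filter, Fin.sum_univ_eight] <;>
      simp [ed0, ed1, ed2, ed3, ed4, ed5, ed6, ed7, N, ind, Sym2.mem_iff]
  obtain ⟨i, v, hpos, heven⟩ := core3 (f 0) (f 1) (f 2) (f 3) (f 4) (f 5) (f 6) (f 7)
  rw [← hNv i v] at hpos heven
  have hex : ∃ e ∈ Es i, v ∈ e := by
    obtain ⟨j, hj⟩ := Finset.card_pos.mp hpos
    simp only [Finset.mem_filter, Finset.mem_univ, true_and] at hj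
    exact ⟨ed j, (hfi j i).1 hj.1, hj.2⟩
  have hoi := hodd (Es i) (by fin_cases i <;> simp [hEs]) v hex
  rw [hcard i v, Nat.odd_iff] at hoi
  omega
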